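/- For every real x with 0 ≤ x < 1 and every integer k ≥ 1, 0 ≤ ∑_{m=−k+1}^{∞} (exp(−2^{x−m}) − (1 − 2^{−m−k})^{2^{k+x}}) ≤ 2^{−x−k} · h(x), where h(x) = ∑_{m=−∞}^{∞} 2^{2x−2m} exp(−2^{x−m}). -/
import Mathlib

-- key pointwise inequality
lemma key_ineq (b lam : ℝ) (hb0 : 0 < b) (hb : b ≤ 1/2) (hl : 0 ≤ lam) :
    0 ≤ Real.exp (-(lam * b)) - (1 - b) ^ lam ∧
    Real.exp (-(lam * b)) - (1 - b) ^ lam ≤ lam * b ^ 2 * Real.exp (-(lam * b)) := by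
  have h1 : (0:ℝ) < 1 - b := by linarith
  have hlog_le : Real.log (1 - b) ≤ -b := by
    have := Real.log_le_sub_one_of_pos h1
    linarith
  have hlog_ge : -b - b^2 ≤ Real.log (1 - b) := by
    rw [Real.le_log_iff_exp_le h1]
    have hq := Real.quadratic_le_exp_of_nonneg (x := b + b^2) (by positivity)
    have hkey : Real.exp (b + b^2) * Real.exp (-b - b^2) = 1 := by
      rw [← Real.exp_add]; norm_num
    have hpos : (0:ℝ) < Real.exp (-b - b^2) := Real.exp_pos _
    -- (1-b) * exp(b+b^2) ≥ 1
    have h2 : 1 ≤ (1 - b) * Real.exp (b + b^2) := by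
      calc (1:ℝ) ≤ (1 - b) * (1 + (b + b^2) + (b + b^2)^2/2) := by nlinarith
        _ ≤ (1 - b) * Real.exp (b + b^2) := by nlinarith
    nlinarith [Real.exp_pos (b + b^2)]
  have hrw : (1 - b) ^ lam = Real.exp (lam * Real.log (1 - b)) := by
    rw [Real.rpow_def_of_pos h1, mul_comm]
  constructor
  · rw [hrw, sub_nonneg]
    apply Real.exp_le_exp.2
    nlinarith
  · rw [hrw]
    have h3 : Real.exp (-(lam * b) - lam * b^2) ≤ Real.exp (lam * Real.log (1 - b)) := by
      apply Real.exp_le_exp.2; nlinarith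
    have h4 : Real.exp (-(lam * b)) - Real.exp (-(lam * b) - lam * b^2)
        ≤ lam * b^2 * Real.exp (-(lam * b)) := by
      have h5 : Real.exp (-(lam*b) - lam*b^2) = Real.exp (-(lam*b)) * Real.exp (-(lam*b^2)) := by
        rw [← Real.exp_add]; ring_nf
      have h6 : 1 - lam * b^2 ≤ Real.exp (-(lam * b^2)) := by
        have := Real.add_one_le_exp (-(lam * b^2)); linarith
      rw [h5]
      have := Real.exp_pos (-(lam*b))
      nlinarith
    linarith
lemma geom_aux (c : ℝ) (n : ℕ) : (2:ℝ) ^ (c - 2*(n:ℝ)) = (2:ℝ)^c * ((1:ℝ)/4)^n := by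
  induction n with
  | zero => simp
  | succ m ih =>
    push_cast
    rw [show c - 2*((m:ℝ)+1) = (c - 2*(m:ℝ)) + (-2) by ring, Real.rpow_add two_pos, ih]
    norm_num; ring

lemma geom_aux' (c : ℝ) (n : ℕ) : (2:ℝ) ^ (c + 2*(n:ℝ)) = (2:ℝ)^c * (4:ℝ)^n := by
  induction n with
  | zero => simp
  | succ m ih =>
    push_cast
    rw [show c + 2*((m:ℝ)+1) = (c + 2*(m:ℝ)) + 2 by ring, Real.rpow_add two_pos, ih]
    norm_num; ring

lemma f_summable (x : ℝ) (hx0 : 0 ≤ x) (hx1 : x < 1) :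
    Summable (fun m : ℤ => (2:ℝ) ^ (2*x - 2*(m:ℝ)) * Real.exp (-(2:ℝ) ^ (x - (m:ℝ)))) := by
  apply Summable.of_nat_of_neg_add_one
  · apply Summable.of_nonneg_of_le (fun n => by positivity) (fun n => ?_)
      ((summable_geometric_of_lt_one (by norm_num) (by norm_num : ((1:ℝ)/4) < 1)).mul_left 4)
    push_cast
    have h1 : Real.exp (-(2:ℝ) ^ (x - (n:ℝ))) ≤ 1 := by
      rw [Real.exp_le_one_iff]
      have := Real.rpow_pos_of_pos two_pos (x - (n:ℝ)); linarith
    have h2 : (2:ℝ) ^ (2*x - 2*(n:ℝ)) ≤ 4 * ((1:ℝ)/4)^n := by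
      calc (2:ℝ) ^ (2*x - 2*(n:ℝ)) ≤ (2:ℝ) ^ (2 - 2*(n:ℝ)) :=
            Real.rpow_le_rpow_of_exponent_le one_le_two (by linarith)
        _ = 4 * ((1:ℝ)/4)^n := by rw [geom_aux]; norm_num
    have h3 : (0:ℝ) < (2:ℝ) ^ (2*x - 2*(n:ℝ)) := Real.rpow_pos_of_pos two_pos _
    calc (2:ℝ) ^ (2*x - 2*(n:ℝ)) * Real.exp (-(2:ℝ) ^ (x - (n:ℝ)))
        ≤ (2:ℝ) ^ (2*x - 2*(n:ℝ)) * 1 := mul_le_mul_of_nonneg_left h1 h3.le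
      _ ≤ 4 * ((1:ℝ)/4)^n := by rw [mul_one]; exact h2
  · apply Summable.of_nonneg_of_le (fun n => by positivity) (fun n => ?_)
      ((summable_geometric_of_lt_one (by norm_num) (by norm_num : ((1:ℝ)/2) < 1)).mul_left 12)
    push_cast
    -- term: 2^(2x - 2*(-(n)-1)) * exp(-(2^(x - (-(n)-1)))) ≤ 12 * (1/2)^n
    set t : ℝ := (2:ℝ)^(n+1) with ht
    have htpos : (0:ℝ) < t := by positivity
    have hA : (2:ℝ) ^ (2*x - 2*(-((n:ℝ)+1))) ≤ 16 * (4:ℝ)^n := by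
      calc (2:ℝ) ^ (2*x - 2*(-((n:ℝ)+1))) ≤ (2:ℝ) ^ (4 + 2*(n:ℝ)) :=
            Real.rpow_le_rpow_of_exponent_le one_le_two (by linarith)
        _ = 16 * (4:ℝ)^n := by rw [geom_aux']; norm_num
    have hrt : (2:ℝ) ^ ((n:ℝ)+1) = t := by
      rw [ht, show ((n:ℝ)+1) = ((n+1:ℕ):ℝ) by push_cast; ring, Real.rpow_natCast]
    have hB : Real.exp (-(2:ℝ) ^ (x - (-((n:ℝ)+1)))) ≤ 6 / t^3 := by
      have hge : (2:ℝ) ^ ((n:ℝ)+1) ≤ (2:ℝ) ^ (x - (-((n:ℝ)+1))) :=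
        Real.rpow_le_rpow_of_exponent_le one_le_two (by linarith)
      rw [hrt] at hge
      have hexp : t^3 / 6 ≤ Real.exp t := by
        have := Real.pow_div_factorial_le_exp (x := t) htpos.le 3
        norm_num [Nat.factorial] at this; linarith
      have h6 : Real.exp (-(2:ℝ) ^ (x - (-((n:ℝ)+1)))) ≤ Real.exp (-t) :=
        Real.exp_le_exp.2 (by linarith)
      have h7 : Real.exp (-t) ≤ 6 / t^3 := by
        rw [Real.exp_neg]
        have h0 : (0:ℝ) < t^3/6 := by positivity
        calc (Real.exp t)⁻¹ ≤ (t^3/6)⁻¹ := inv_anti₀ h0 hexp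
          _ = 6 / t^3 := by field_simp
      linarith
    have hfpos : (0:ℝ) < (2:ℝ) ^ (2*x - 2*(-((n:ℝ)+1))) := Real.rpow_pos_of_pos two_pos _
    have h8 : ((2:ℝ)^(n+1))^3 = 8 * 8^n := by
      rw [← pow_mul, show (n+1)*3 = 3 + 3*n by ring, pow_add, pow_mul]; norm_num
    calc (2:ℝ) ^ (2*x - 2*(-((n:ℝ)+1))) * Real.exp (-(2:ℝ) ^ (x - (-((n:ℝ)+1))))
        ≤ (16 * (4:ℝ)^n) * (6 / t^3) := by
          exact mul_le_mul hA hB (Real.exp_pos _).le (by positivity)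
      _ = 12 * ((1:ℝ)/2)^n := by
          rw [ht, h8, show ((1:ℝ)/2)^n = 4^n/8^n by rw [← div_pow]; norm_num]
          field_simp; ring



open Real

/-- `h(x) = ∑_{m=-∞}^{∞} 2^{2x-2m} exp(-2^{x-m})`, summed over all `m : ℤ`. -/
noncomputable def h (x : ℝ) : ℝ :=
  ∑' m : ℤ, (2 : ℝ) ^ (2 * x - 2 * (m : ℝ)) * Real.exp (-(2 : ℝ) ^ (x - (m : ℝ)))

/-- For `0 ≤ x < 1` and integers `k ≥ 1`,
`0 ≤ ∑_{m=-k+1}^{∞} (exp(-2^{x-m}) - (1 - 2^{-m-k})^{2^{k+x}}) ≤ 2^{-x-k} h(x)`.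
The sum is reindexed by `m = j - k + 1`, `j : ℕ`, so that `x - m = x + k - 1 - j`
and `-m - k = -(j+1)`; the exponent `2^{k+x}` is a real power. -/
theorem error_sum_bounds (x : ℝ) (hx0 : 0 ≤ x) (hx1 : x < 1)
    (k : ℕ) (hk : 1 ≤ k) :
    0 ≤ ∑' j : ℕ, (Real.exp (-(2 : ℝ) ^ (x + k - 1 - j))
        - (1 - (2 : ℝ)⁻¹ ^ (j + 1)) ^ ((2 : ℝ) ^ ((k : ℝ) + x))) ∧
    (∑' j : ℕ, (Real.exp (-(2 : ℝ) ^ (x + k - 1 - j))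
        - (1 - (2 : ℝ)⁻¹ ^ (j + 1)) ^ ((2 : ℝ) ^ ((k : ℝ) + x)))) ≤
      (2 : ℝ) ^ (-x - k) * h x := by
  have hlam_pos : (0:ℝ) < (2:ℝ) ^ ((k:ℝ) + x) := Real.rpow_pos_of_pos two_pos _
  set lam : ℝ := (2:ℝ) ^ ((k:ℝ) + x) with hlam
  have hb_pos : ∀ j : ℕ, (0:ℝ) < (2:ℝ)⁻¹ ^ (j+1) := fun j => by positivity
  have hb_le : ∀ j : ℕ, (2:ℝ)⁻¹ ^ (j+1) ≤ 1/2 := fun j => by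
    calc (2:ℝ)⁻¹ ^ (j+1) ≤ (2:ℝ)⁻¹ ^ 1 :=
          pow_le_pow_of_le_one (by norm_num) (by norm_num) (by omega)
      _ = 1/2 := by norm_num
  have hb_eq : ∀ j : ℕ, ((2:ℝ)⁻¹) ^ (j+1) = (2:ℝ) ^ (-((j:ℝ)+1)) := fun j => by
    rw [Real.rpow_neg (by norm_num), show ((j:ℝ)+1) = ((j+1:ℕ):ℝ) by push_cast; ring,
      Real.rpow_natCast, ← inv_pow]
  have hlb : ∀ j : ℕ, lam * (2:ℝ)⁻¹ ^ (j+1) = (2:ℝ) ^ (x + (k:ℝ) - 1 - (j:ℝ)) := fun j => by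
    rw [hlam, hb_eq, ← Real.rpow_add two_pos]; congr 1; ring
  have hkey := fun j : ℕ => key_ineq ((2:ℝ)⁻¹ ^ (j+1)) lam (hb_pos j) (hb_le j) hlam_pos.le
  have hT0 : ∀ j : ℕ, 0 ≤ Real.exp (-(2:ℝ) ^ (x + (k:ℝ) - 1 - (j:ℝ)))
      - (1 - (2:ℝ)⁻¹ ^ (j+1)) ^ lam := fun j => by
    rw [← hlb j]; exact (hkey j).1
  have hTg : ∀ j : ℕ, Real.exp (-(2:ℝ) ^ (x + (k:ℝ) - 1 - (j:ℝ)))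
      - (1 - (2:ℝ)⁻¹ ^ (j+1)) ^ lam
      ≤ lam * ((2:ℝ)⁻¹ ^ (j+1))^2 * Real.exp (-(lam * (2:ℝ)⁻¹ ^ (j+1))) := fun j => by
    rw [← hlb j]; exact (hkey j).2
  have hg0 : ∀ j : ℕ, 0 ≤ lam * ((2:ℝ)⁻¹ ^ (j+1))^2 * Real.exp (-(lam * (2:ℝ)⁻¹ ^ (j+1))) :=
    fun j => by positivity
  have hg_le : ∀ j : ℕ, lam * ((2:ℝ)⁻¹ ^ (j+1))^2 * Real.exp (-(lam * (2:ℝ)⁻¹ ^ (j+1)))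
      ≤ lam * ((1:ℝ)/4)^j := fun j => by
    have hb2 : ((2:ℝ)⁻¹ ^ (j+1))^2 = ((1:ℝ)/4)^(j+1) := by
      rw [← pow_mul, show (j+1)*2 = 2*(j+1) by ring, pow_mul]; norm_num
    have hexp1 : Real.exp (-(lam * (2:ℝ)⁻¹ ^ (j+1))) ≤ 1 := by
      rw [Real.exp_le_one_iff]
      have := mul_pos hlam_pos (hb_pos j); linarith
    have h4 : ((1:ℝ)/4)^(j+1) ≤ ((1:ℝ)/4)^j :=
      pow_le_pow_of_le_one (by norm_num) (by norm_num) (by omega)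
    calc lam * ((2:ℝ)⁻¹ ^ (j+1))^2 * Real.exp (-(lam * (2:ℝ)⁻¹ ^ (j+1)))
        ≤ lam * ((2:ℝ)⁻¹ ^ (j+1))^2 * 1 :=
          mul_le_mul_of_nonneg_left hexp1 (by positivity)
      _ = lam * ((1:ℝ)/4)^(j+1) := by rw [hb2, mul_one]
      _ ≤ lam * ((1:ℝ)/4)^j := mul_le_mul_of_nonneg_left h4 hlam_pos.le
  have hg_sum : Summable (fun j : ℕ =>
      lam * ((2:ℝ)⁻¹ ^ (j+1))^2 * Real.exp (-(lam * (2:ℝ)⁻¹ ^ (j+1)))) :=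
    Summable.of_nonneg_of_le hg0 hg_le
      ((summable_geometric_of_lt_one (by norm_num) (by norm_num : ((1:ℝ)/4) < 1)).mul_left lam)
  have hT_sum : Summable (fun j : ℕ => Real.exp (-(2:ℝ) ^ (x + (k:ℝ) - 1 - (j:ℝ)))
      - (1 - (2:ℝ)⁻¹ ^ (j+1)) ^ lam) :=
    Summable.of_nonneg_of_le hT0 hTg hg_sum
  constructor
  · exact tsum_nonneg hT0
  · have step1 : (∑' j : ℕ, (Real.exp (-(2:ℝ) ^ (x + (k:ℝ) - 1 - (j:ℝ)))
        - (1 - (2:ℝ)⁻¹ ^ (j+1)) ^ lam))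
        ≤ ∑' j : ℕ, lam * ((2:ℝ)⁻¹ ^ (j+1))^2 * Real.exp (-(lam * (2:ℝ)⁻¹ ^ (j+1))) :=
      Summable.tsum_le_tsum hTg hT_sum hg_sum
    have hfs := f_summable x hx0 hx1
    have hi : Function.Injective (fun j : ℕ => (j:ℤ) - k + 1) := by
      intro a b hab; simpa using hab
    have hgf : ∀ j : ℕ, lam * ((2:ℝ)⁻¹ ^ (j+1))^2 * Real.exp (-(lam * (2:ℝ)⁻¹ ^ (j+1)))
        = (2:ℝ) ^ (-x - (k:ℝ)) * ((2:ℝ) ^ (2*x - 2*((((j:ℤ) - k + 1):ℤ):ℝ))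
          * Real.exp (-(2:ℝ) ^ (x - ((((j:ℤ) - k + 1):ℤ):ℝ)))) := fun j => by
      push_cast
      have e2 : lam * ((2:ℝ)⁻¹ ^ (j+1)) = (2:ℝ) ^ (x - ((j:ℝ) - (k:ℝ) + 1)) := by
        rw [hlb j]; congr 1; ring
      have e1 : lam * ((2:ℝ)⁻¹ ^ (j+1))^2
          = (2:ℝ) ^ (-x - (k:ℝ)) * (2:ℝ) ^ (2*x - 2*((j:ℝ) - (k:ℝ) + 1)) := by
        rw [hlam, hb_eq, sq, ← Real.rpow_add two_pos, ← Real.rpow_add two_pos,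
          ← Real.rpow_add two_pos]
        congr 1; ring
      rw [e2, e1, mul_assoc]
    have step2 : (∑' j : ℕ, lam * ((2:ℝ)⁻¹ ^ (j+1))^2
          * Real.exp (-(lam * (2:ℝ)⁻¹ ^ (j+1))))
        = (2:ℝ) ^ (-x - (k:ℝ)) * ∑' j : ℕ, ((2:ℝ) ^ (2*x - 2*((((j:ℤ) - k + 1):ℤ):ℝ))
          * Real.exp (-(2:ℝ) ^ (x - ((((j:ℤ) - k + 1):ℤ):ℝ)))) := by
      simp_rw [hgf]; exact tsum_mul_left
    have step3 : (∑' j : ℕ, ((2:ℝ) ^ (2*x - 2*((((j:ℤ) - k + 1):ℤ):ℝ))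
          * Real.exp (-(2:ℝ) ^ (x - ((((j:ℤ) - k + 1):ℤ):ℝ))))) ≤ h x := by
      have := tsum_comp_le_tsum_of_inj hfs (fun m => by positivity) hi
      exact this
    calc (∑' j : ℕ, (Real.exp (-(2:ℝ) ^ (x + (k:ℝ) - 1 - (j:ℝ)))
          - (1 - (2:ℝ)⁻¹ ^ (j+1)) ^ lam))
        ≤ ∑' j : ℕ, lam * ((2:ℝ)⁻¹ ^ (j+1))^2
            * Real.exp (-(lam * (2:ℝ)⁻¹ ^ (j+1))) := step1
      _ = (2:ℝ) ^ (-x - (k:ℝ)) * ∑' j : ℕ, ((2:ℝ) ^ (2*x - 2*((((j:ℤ) - k + 1):ℤ):ℝ))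
            * Real.exp (-(2:ℝ) ^ (x - ((((j:ℤ) - k + 1):ℤ):ℝ)))) := step2
      _ ≤ (2:ℝ) ^ (-x - (k:ℝ)) * h x :=
          mul_le_mul_of_nonneg_left step3 (Real.rpow_nonneg (by norm_num) _)
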